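/- Let 𝒜 and ℬ be unital C*-algebras with x_1,…,x_r ∈ 𝒜 and y_1,…,y_r ∈ ℬ self-adjoint, and suppose that for every polynomial p ∈ ℂ⟨X_1,…,X_r⟩, σ(p(x_1,…,x_r)) ⊇ σ(p(y_1,…,y_r)). Then ‖p(x_1,…,x_r)‖ ≥ ‖p(y_1,…,y_r)‖ for all p ∈ ℂ⟨X_1,…,X_r⟩, and consequently there exists a unital *-homomorphism φ: C*(1_𝒜, x_1,…,x_r) → C*(1_ℬ, y_1,…,y_r) with φ(x_i) = y_i for i = 1,…,r. -/

import Mathlib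

open scoped NNReal ENNReal

set_option linter.unusedSectionVars false
section Aux
variable {A B : Type*} [CStarAlgebra A] [CStarAlgebra B] [StarModule ℂ A] [StarModule ℂ B]
  {r : ℕ}

lemma aux_spectralRadius_mono {a : A} {b : B}
    (h : spectrum ℂ b ⊆ spectrum ℂ a) : spectralRadius ℂ b ≤ spectralRadius ℂ a :=
  iSup₂_le fun k hk => le_iSup₂ (f := fun k _ => (‖k‖₊ : ℝ≥0∞)) k (h hk)

lemma aux_lift_prod (x : Fin r → A) (y : Fin r → B) (p : FreeAlgebra ℂ (Fin r)) :
    FreeAlgebra.lift ℂ (fun i => (x i, y i) : Fin r → A × B) p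
      = (FreeAlgebra.lift ℂ x p, FreeAlgebra.lift ℂ y p) := by
  have : ((FreeAlgebra.lift ℂ x).prod (FreeAlgebra.lift ℂ y))
      = FreeAlgebra.lift ℂ (fun i => (x i, y i)) := by
    apply FreeAlgebra.hom_ext
    funext i
    simp [FreeAlgebra.lift_ι_apply]
  rw [← this, AlgHom.prod_apply]

lemma aux_mem_range (x : Fin r → A) (hx : ∀ i, IsSelfAdjoint (x i)) {a : A}
    (ha : a ∈ (FreeAlgebra.lift ℂ x).range) : star a ∈ (FreeAlgebra.lift ℂ x).range := by
  rw [← Algebra.adjoin_range_eq_range_freeAlgebra_lift] at ha ⊢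
  have hstar : star (Set.range x) = Set.range x := by
    ext a
    simp only [Set.mem_star, Set.mem_range]
    constructor
    · rintro ⟨i, hi⟩; exact ⟨i, by rw [← (hx i).star_eq, hi, star_star]⟩
    · rintro ⟨i, hi⟩; exact ⟨i, by rw [← hi, (hx i).star_eq]⟩
  have : star a ∈ star (Algebra.adjoin ℂ (Set.range x)) := by
    rw [Subalgebra.mem_star_iff, star_star]; exact ha
  rwa [Subalgebra.star_adjoin_comm, hstar] at this

/-- the common-star lemma via the product trick -/
lemma aux_star_exists (x : Fin r → A) (y : Fin r → B)
    (hx : ∀ i, IsSelfAdjoint (x i)) (hy : ∀ i, IsSelfAdjoint (y i))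
    (p : FreeAlgebra ℂ (Fin r)) :
    ∃ q, FreeAlgebra.lift ℂ x q = star (FreeAlgebra.lift ℂ x p)
      ∧ FreeAlgebra.lift ℂ y q = star (FreeAlgebra.lift ℂ y p) := by
  have hza : ∀ i, IsSelfAdjoint ((fun i => (x i, y i) : Fin r → A × B) i) :=
    fun i => Prod.ext (hx i).star_eq (hy i).star_eq
  have h1 : FreeAlgebra.lift ℂ (fun i => (x i, y i) : Fin r → A × B) p
      ∈ (FreeAlgebra.lift ℂ (fun i => (x i, y i) : Fin r → A × B)).range := ⟨p, rfl⟩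
  obtain ⟨q, hq⟩ := (AlgHom.mem_range _).mp (aux_mem_range _ hza h1)
  rw [aux_lift_prod, aux_lift_prod, Prod.mk.injEq] at hq
  exact ⟨q, hq.1, hq.2⟩

lemma aux_norm_le (x : Fin r → A) (y : Fin r → B)
    (hx : ∀ i, IsSelfAdjoint (x i)) (hy : ∀ i, IsSelfAdjoint (y i))
    (h : ∀ p : FreeAlgebra ℂ (Fin r),
      spectrum ℂ (FreeAlgebra.lift ℂ y p) ⊆ spectrum ℂ (FreeAlgebra.lift ℂ x p))
    (p : FreeAlgebra ℂ (Fin r)) :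
    ‖FreeAlgebra.lift ℂ y p‖ ≤ ‖FreeAlgebra.lift ℂ x p‖ := by
  obtain ⟨q, hqx, hqy⟩ := aux_star_exists x y hx hy p
  have e1 : spectralRadius ℂ (FreeAlgebra.lift ℂ y (q * p))
      = (‖FreeAlgebra.lift ℂ y p‖₊ : ℝ≥0∞) ^ 2 := by
    rw [map_mul, hqy, (IsSelfAdjoint.star_mul_self _).spectralRadius_eq_nnnorm,
      CStarRing.nnnorm_star_mul_self, sq, ENNReal.coe_mul]
  have e2 : spectralRadius ℂ (FreeAlgebra.lift ℂ x (q * p))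
      = (‖FreeAlgebra.lift ℂ x p‖₊ : ℝ≥0∞) ^ 2 := by
    rw [map_mul, hqx, (IsSelfAdjoint.star_mul_self _).spectralRadius_eq_nnnorm,
      CStarRing.nnnorm_star_mul_self, sq, ENNReal.coe_mul]
  have := aux_spectralRadius_mono (h (q * p))
  rw [e1, e2] at this
  have h2 : ‖FreeAlgebra.lift ℂ y p‖₊ ≤ ‖FreeAlgebra.lift ℂ x p‖₊ := by
    have h3 : (‖FreeAlgebra.lift ℂ y p‖₊) ^ 2 ≤ (‖FreeAlgebra.lift ℂ x p‖₊) ^ 2 := by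
      exact_mod_cast this
    exact (pow_le_pow_iff_left₀ zero_le zero_le two_ne_zero).mp h3
  exact_mod_cast h2

lemma aux_key (x : Fin r → A) (y : Fin r → B)
    (hx : ∀ i, IsSelfAdjoint (x i)) (hy : ∀ i, IsSelfAdjoint (y i))
    (h : ∀ p : FreeAlgebra ℂ (Fin r),
      spectrum ℂ (FreeAlgebra.lift ℂ y p) ⊆ spectrum ℂ (FreeAlgebra.lift ℂ x p))
    {p p' : FreeAlgebra ℂ (Fin r)}
    (hpp : FreeAlgebra.lift ℂ x p = FreeAlgebra.lift ℂ x p') :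
    FreeAlgebra.lift ℂ y p = FreeAlgebra.lift ℂ y p' := by
  have := aux_norm_le x y hx hy h (p - p')
  rw [map_sub, map_sub, hpp, sub_self, norm_zero] at this
  have := le_antisymm this (norm_nonneg _)
  rwa [norm_eq_zero, sub_eq_zero] at this

end Aux
section Main

lemma aux_star_range {A : Type*} [CStarAlgebra A] {r : ℕ} (x : Fin r → A)
    (hx : ∀ i, IsSelfAdjoint (x i)) : Set.range x ∪ star (Set.range x) = Set.range x := by
  rw [Set.union_eq_self_of_subset_right]
  rintro a ha
  rw [Set.mem_star] at ha
  obtain ⟨i, hi⟩ := ha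
  exact ⟨i, by rw [← (hx i).star_eq, hi, star_star]⟩

lemma aux_adjoin_eq {A : Type*} [CStarAlgebra A] [StarModule ℂ A] {r : ℕ} (x : Fin r → A)
    (hx : ∀ i, IsSelfAdjoint (x i)) :
    (StarAlgebra.adjoin ℂ (Set.range x)).toSubalgebra = (FreeAlgebra.lift ℂ x).range := by
  rw [StarAlgebra.adjoin_toSubalgebra, aux_star_range x hx,
    Algebra.adjoin_range_eq_range_freeAlgebra_lift]

lemma aux_memS {A : Type*} [CStarAlgebra A] [StarModule ℂ A] {r : ℕ} (x : Fin r → A)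
    (hx : ∀ i, IsSelfAdjoint (x i)) (p : FreeAlgebra ℂ (Fin r)) :
    FreeAlgebra.lift ℂ x p ∈ StarAlgebra.adjoin ℂ (Set.range x) := by
  rw [← StarSubalgebra.mem_toSubalgebra, aux_adjoin_eq x hx]; exact ⟨p, rfl⟩

lemma aux_surS {A : Type*} [CStarAlgebra A] [StarModule ℂ A] {r : ℕ} (x : Fin r → A)
    (hx : ∀ i, IsSelfAdjoint (x i)) (a : StarAlgebra.adjoin ℂ (Set.range x)) :
    ∃ p, FreeAlgebra.lift ℂ x p = (a : A) := by
  have := a.2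
  rw [← StarSubalgebra.mem_toSubalgebra, aux_adjoin_eq x hx] at this
  exact (AlgHom.mem_range _).mp this

theorem star_hom_of_spectra_inclusion' {A B : Type*}
    [CStarAlgebra A] [CStarAlgebra B] [StarModule ℂ A] [StarModule ℂ B]
    (r : ℕ) (x : Fin r → A) (y : Fin r → B)
    (hx : ∀ i, IsSelfAdjoint (x i)) (hy : ∀ i, IsSelfAdjoint (y i))
    (h : ∀ p : FreeAlgebra ℂ (Fin r),
      spectrum ℂ (FreeAlgebra.lift ℂ y p) ⊆ spectrum ℂ (FreeAlgebra.lift ℂ x p)) :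
      ∃ φ : (StarAlgebra.adjoin ℂ (Set.range x)).topologicalClosure →⋆ₐ[ℂ]
          (StarAlgebra.adjoin ℂ (Set.range y)).topologicalClosure,
        ∀ i : Fin r,
          (φ ⟨x i, StarSubalgebra.le_topologicalClosure _
              (StarAlgebra.subset_adjoin ℂ _ (Set.mem_range_self i))⟩ : B) = y i := by
  have key : ∀ {p p' : FreeAlgebra ℂ (Fin r)},
      FreeAlgebra.lift ℂ x p = FreeAlgebra.lift ℂ x p' →
      FreeAlgebra.lift ℂ y p = FreeAlgebra.lift ℂ y p' :=
    fun hpp => aux_key x y hx hy h hpp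
  choose g hg using aux_surS x hx
  -- the map on the dense subalgebra
  let f0 : StarAlgebra.adjoin ℂ (Set.range x) →
      ↥(StarAlgebra.adjoin ℂ (Set.range y)).topologicalClosure := fun a =>
    ⟨FreeAlgebra.lift ℂ y (g a), StarSubalgebra.le_topologicalClosure _ (aux_memS y hy (g a))⟩
  let flin : StarAlgebra.adjoin ℂ (Set.range x) →ₗ[ℂ]
      ↥(StarAlgebra.adjoin ℂ (Set.range y)).topologicalClosure :=
    { toFun := f0
      map_add' := fun a b => Subtype.ext <| by
        show FreeAlgebra.lift ℂ y (g (a + b))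
          = FreeAlgebra.lift ℂ y (g a) + FreeAlgebra.lift ℂ y (g b)
        rw [← map_add]
        exact key (by rw [hg, map_add, hg, hg]; rfl)
      map_smul' := fun c a => Subtype.ext <| by
        show FreeAlgebra.lift ℂ y (g (c • a)) = c • FreeAlgebra.lift ℂ y (g a)
        rw [← map_smul]
        exact key (by rw [hg, map_smul, hg]; rfl) }
  have fbound : ∀ a, ‖flin a‖ ≤ 1 * ‖a‖ := fun a => by
    rw [one_mul]
    show ‖FreeAlgebra.lift ℂ y (g a)‖ ≤ ‖(a : A)‖
    rw [← hg a]
    exact aux_norm_le x y hx hy h (g a)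
  let f := flin.mkContinuous 1 fbound
  -- the inclusion into the closure
  let elin : StarAlgebra.adjoin ℂ (Set.range x) →ₗ[ℂ]
      ↥(StarAlgebra.adjoin ℂ (Set.range x)).topologicalClosure :=
    (StarSubalgebra.inclusion (StarSubalgebra.le_topologicalClosure _)).toAlgHom.toLinearMap
  let e := elin.mkContinuous 1 (fun a => by rw [one_mul]; exact le_of_eq rfl)
  have hiso : Isometry e := AddMonoidHomClass.isometry_of_norm e (fun a => rfl)
  have h_dense : DenseRange e := by
    refine Topology.IsInducing.subtypeVal.dense_iff.2 fun a => ?_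
    convert show (a : A) ∈ closure ((StarAlgebra.adjoin ℂ (Set.range x) : Set A)) from a.prop
    rw [← Set.range_comp]
    exact Set.ext fun b =>
      ⟨by rintro ⟨b, rfl⟩; exact b.prop, fun hb => ⟨⟨b, hb⟩, rfl⟩⟩
  have h_e := hiso.isUniformInducing
  let φL := f.extend e
  have heq : ∀ a, φL (e a) = f a := fun a =>
    ContinuousLinearMap.extend_eq (f := f) (e := e) h_dense h_e a
  have hone : f 1 = 1 := Subtype.ext <| by
    show FreeAlgebra.lift ℂ y (g 1) = 1
    rw [key (p' := 1) (by rw [hg, map_one]; rfl), map_one]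
  have hmul : ∀ a b, f (a * b) = f a * f b := fun a b => Subtype.ext <| by
    show FreeAlgebra.lift ℂ y (g (a * b))
      = FreeAlgebra.lift ℂ y (g a) * FreeAlgebra.lift ℂ y (g b)
    rw [← map_mul]
    exact key (by rw [hg, map_mul, hg, hg]; rfl)
  have hstar : ∀ a, f (star a) = star (f a) := fun a => Subtype.ext <| by
    show FreeAlgebra.lift ℂ y (g (star a)) = star (FreeAlgebra.lift ℂ y (g a))
    obtain ⟨q, hqx, hqy⟩ := aux_star_exists x y hx hy (g a)
    rw [← hqy]
    refine key ?_
    rw [hg, hqx, hg]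
    rfl
  have hmul' : ∀ a b, φL (a * b) = φL a * φL b := by
    refine h_dense.induction_on₂ ?_ ?_
    · exact isClosed_eq (φL.continuous.comp continuous_mul)
        ((φL.continuous.comp continuous_fst).mul (φL.continuous.comp continuous_snd))
    · intro a b
      have : e a * e b = e (a * b) := Subtype.ext rfl
      rw [this, heq, heq, heq, hmul]
  have hstar' : ∀ a, φL (star a) = star (φL a) := by
    intro a
    refine h_dense.induction_on a ?_ ?_
    · exact isClosed_eq (φL.continuous.comp continuous_star)
        (continuous_star.comp φL.continuous)
    · intro b
      have : star (e b) = e (star b) := Subtype.ext rfl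
      rw [this, heq, heq, hstar]
  have hone' : φL 1 = 1 := by
    have h1 : (1 : ↥(StarAlgebra.adjoin ℂ (Set.range x)).topologicalClosure) = e 1 :=
      Subtype.ext rfl
    rw [h1, heq, hone]
  refine ⟨{ toFun := φL
            map_one' := hone'
            map_mul' := hmul'
            map_zero' := map_zero φL
            map_add' := map_add φL
            commutes' := fun c => by
              rw [Algebra.algebraMap_eq_smul_one, Algebra.algebraMap_eq_smul_one]
              show φL (c • 1) = c • 1
              rw [map_smul, hone']
            map_star' := hstar' }, ?_⟩
  intro i
  have hx_mem : x i ∈ StarAlgebra.adjoin ℂ (Set.range x) :=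
    StarAlgebra.subset_adjoin ℂ _ (Set.mem_range_self i)
  show (φL ⟨x i, _⟩ : B) = y i
  have h2 : (⟨x i, StarSubalgebra.le_topologicalClosure _
      (StarAlgebra.subset_adjoin ℂ _ (Set.mem_range_self i))⟩ :
      ↥(StarAlgebra.adjoin ℂ (Set.range x)).topologicalClosure) = e ⟨x i, hx_mem⟩ :=
    Subtype.ext rfl
  rw [h2, heq]
  show FreeAlgebra.lift ℂ y (g ⟨x i, hx_mem⟩) = y i
  have h3 : FreeAlgebra.lift ℂ x (g ⟨x i, hx_mem⟩) = FreeAlgebra.lift ℂ x (FreeAlgebra.ι ℂ i) := by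
    rw [hg, FreeAlgebra.lift_ι_apply]
  rw [key h3, FreeAlgebra.lift_ι_apply]

end Main

/-- If the spectra of all polynomial expressions in `x₁,…,x_r` contain the
corresponding spectra in `y₁,…,y_r`, then norms dominate and there is a unital
*-homomorphism `C*(1, x₁,…,x_r) → C*(1, y₁,…,y_r)` sending `xᵢ ↦ yᵢ`. -/
theorem star_hom_of_spectra_inclusion {A B : Type*}
    [CStarAlgebra A] [CStarAlgebra B] [StarModule ℂ A] [StarModule ℂ B]
    (r : ℕ) (x : Fin r → A) (y : Fin r → B)
    (hx : ∀ i, IsSelfAdjoint (x i)) (hy : ∀ i, IsSelfAdjoint (y i))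
    (h : ∀ p : FreeAlgebra ℂ (Fin r),
      spectrum ℂ (FreeAlgebra.lift ℂ y p) ⊆ spectrum ℂ (FreeAlgebra.lift ℂ x p)) :
    (∀ p : FreeAlgebra ℂ (Fin r),
        ‖FreeAlgebra.lift ℂ y p‖ ≤ ‖FreeAlgebra.lift ℂ x p‖) ∧
      ∃ φ : (StarAlgebra.adjoin ℂ (Set.range x)).topologicalClosure →⋆ₐ[ℂ]
          (StarAlgebra.adjoin ℂ (Set.range y)).topologicalClosure,
        ∀ i : Fin r,
          (φ ⟨x i, StarSubalgebra.le_topologicalClosure _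
              (StarAlgebra.subset_adjoin ℂ _ (Set.mem_range_self i))⟩ : B) = y i :=
  ⟨aux_norm_le x y hx hy h, star_hom_of_spectra_inclusion' r x y hx hy h⟩
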